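/- Let n ≥ 2, let ζ = exp(2πi/n) ∈ ℂ, and let t ∈ ℂ with |t| = 1. Then cos(π/n) is the greatest element of the set of real roots of the derivative f_t′, and −cos(π/n) is its least element: IsGreatest {x : ℝ | (derivative f_t).eval x = 0} (cos(π/n)) and IsLeast {x : ℝ | (derivative f_t).eval x = 0} (−cos(π/n)). Geometrically, the leftmost and rightmost vertical lines through the critical points of f_t are tangent to the circle inscribed in the regular n-gon (which has radius cos(π/n)). -/

import Mathlib

open Polynomial Finset Real

/-- The key trigonometric product identity. -/
lemma key_prod (n : ℕ) (hn : 1 ≤ n) (θ φ : ℝ) :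
    ∏ k ∈ Finset.range n, (Real.cos φ - Real.cos (θ + 2 * π * k / n)) =
      ((2 : ℝ) ^ (n - 1))⁻¹ * (Real.cos (n * φ) - Real.cos (n * θ)) := by
  obtain ⟨m, rfl⟩ : ∃ m, n = m + 1 := ⟨n - 1, by omega⟩
  rw [← Complex.ofReal_inj]
  push_cast [Complex.ofReal_cos]
  set ω : ℂ := Complex.exp (2 * π * Complex.I / (m + 1 : ℕ)) with hωdef
  have hω : IsPrimitiveRoot ω (m + 1) := Complex.isPrimitiveRoot_exp _ (Nat.succ_ne_zero m)
  set z : ℂ := Complex.exp (φ * Complex.I) with hzdef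
  set w : ℂ := Complex.exp (θ * Complex.I) with hwdef
  have hz : z ≠ 0 := Complex.exp_ne_zero _
  have hw : w ≠ 0 := Complex.exp_ne_zero _
  have hωk : ∀ k : ℕ, ω ^ k ≠ 0 := fun k => pow_ne_zero _ (Complex.exp_ne_zero _)
  have hexp : ∀ k : ℕ, Complex.exp ((↑θ + 2 * ↑π * ↑k / ((m : ℂ) + 1)) * Complex.I)
      = ω ^ k * w := by
    intro k
    rw [hωdef, hwdef, ← Complex.exp_nat_mul, ← Complex.exp_add]
    congr 1
    push_cast
    ring
  have hfac : ∀ k ∈ Finset.range (m + 1),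
      Complex.cos ↑φ - Complex.cos (↑θ + 2 * ↑π * ↑k / ((m : ℂ) + 1)) =
        (z - ω ^ k * w) * (z - (ω⁻¹) ^ k * w⁻¹) * (2 * z)⁻¹ := by
    intro k _
    have hu' : (ω⁻¹) ^ k * w⁻¹ = (ω ^ k * w)⁻¹ := by
      rw [mul_inv, inv_pow]
    have hu0 : ω ^ k * w ≠ 0 := mul_ne_zero (hωk k) hw
    simp only [Complex.cos, neg_mul]
    rw [Complex.exp_neg, Complex.exp_neg, hexp k, ← hzdef, hu']
    generalize ω ^ k * w = u at hu0 ⊢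
    field_simp
    ring
  rw [Finset.prod_congr rfl hfac, Finset.prod_mul_distrib, Finset.prod_mul_distrib,
    Finset.prod_const]
  have h1 : ∏ k ∈ Finset.range (m + 1), (z - ω ^ k * w) = z ^ (m + 1) - w ^ (m + 1) := by
    have := X_pow_sub_C_eq_prod hω (Nat.succ_pos m) (rfl : w ^ (m + 1) = w ^ (m + 1))
    have := congrArg (Polynomial.eval z) this
    simpa [Polynomial.eval_prod, mul_comm] using this.symm
  have h2 : ∏ k ∈ Finset.range (m + 1), (z - (ω⁻¹) ^ k * w⁻¹)
      = z ^ (m + 1) - (w ^ (m + 1))⁻¹ := by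
    have := X_pow_sub_C_eq_prod hω.inv (Nat.succ_pos m) (rfl : w⁻¹ ^ (m + 1) = w⁻¹ ^ (m + 1))
    have := congrArg (Polynomial.eval z) this
    simpa [Polynomial.eval_prod, mul_comm, inv_pow] using this.symm
  rw [h1, h2]
  have hZ : z ^ (m + 1) ≠ 0 := pow_ne_zero _ hz
  have hW : w ^ (m + 1) ≠ 0 := pow_ne_zero _ hw
  have hcosφ : Complex.cos (((m : ℂ) + 1) * ↑φ) = (z ^ (m + 1) + (z ^ (m + 1))⁻¹) / 2 := by
    have e1 : Complex.exp (((m : ℂ) + 1) * ↑φ * Complex.I) = z ^ (m + 1) := by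
      rw [hzdef, ← Complex.exp_nat_mul]; congr 1; push_cast; ring
    simp only [Complex.cos, neg_mul]
    rw [Complex.exp_neg, e1]
  have hcosθ : Complex.cos (((m : ℂ) + 1) * ↑θ) = (w ^ (m + 1) + (w ^ (m + 1))⁻¹) / 2 := by
    have e1 : Complex.exp (((m : ℂ) + 1) * ↑θ * Complex.I) = w ^ (m + 1) := by
      rw [hwdef, ← Complex.exp_nat_mul]; congr 1; push_cast; ring
    simp only [Complex.cos, neg_mul]
    rw [Complex.exp_neg, e1]
  rw [hcosφ, hcosθ, Finset.card_range]
  rw [inv_pow, mul_pow, mul_inv, pow_succ (2:ℂ) m]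
  generalize z ^ (m + 1) = Z at hZ ⊢
  generalize w ^ (m + 1) = W at hW ⊢
  field_simp
  ring

/-- `cos (π/n)` is the greatest real root of `f_t'` and `-cos (π/n)` is the least:
the extreme vertical lines through the critical points of `f_t` are tangent to
the inscribed circle of the regular `n`-gon. -/
theorem extreme_critical_points (n : ℕ) (hn : 2 ≤ n)
    (ζ : ℂ) (hζ : ζ = Complex.exp (2 * Real.pi * Complex.I / n))
    (t : ℂ) (ht : ‖t‖ = 1) :
    IsGreatest {x : ℝ |
        (derivative (∏ k ∈ Finset.range n, (X - C (Complex.re (t * ζ ^ k))))).eval x = 0}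
      (Real.cos (Real.pi / n)) ∧
    IsLeast {x : ℝ |
        (derivative (∏ k ∈ Finset.range n, (X - C (Complex.re (t * ζ ^ k))))).eval x = 0}
      (-Real.cos (Real.pi / n)) := by
  have hn0 : (n : ℝ) ≠ 0 := Nat.cast_ne_zero.2 (by omega)
  have hnpos : (0 : ℝ) < n := by positivity
  obtain ⟨θ, hθ⟩ := (Complex.norm_eq_one_iff t).mp ht
  have hre : ∀ k : ℕ, Complex.re (t * ζ ^ k) = Real.cos (θ + 2 * π * k / n) := by
    intro k
    rw [← hθ, hζ, ← Complex.exp_nat_mul, ← Complex.exp_add]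
    have h : (θ : ℂ) * Complex.I + (k : ℂ) * (2 * (π : ℂ) * Complex.I / (n : ℂ))
        = ((θ + 2 * π * k / n : ℝ) : ℂ) * Complex.I := by push_cast; ring
    rw [h, Complex.exp_ofReal_mul_I_re]
  simp only [hre]
  set f : ℝ[X] := ∏ k ∈ Finset.range n, (X - C (Real.cos (θ + 2 * π * k / n))) with hfdef
  have hmono : f.Monic := monic_prod_of_monic _ _ (fun k _ => monic_X_sub_C _)
  have hdeg : f.natDegree = n := by
    rw [hfdef, natDegree_prod_of_monic _ _ (fun k _ => monic_X_sub_C _)]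
    simp [natDegree_X_sub_C]
  -- f equals the Chebyshev expression
  set a : ℝ := ((2 : ℝ) ^ (n - 1))⁻¹ with hadef
  set g : ℝ[X] := C a * Chebyshev.T ℝ n - C (a * Real.cos (n * θ)) with hgdef
  have hfg : f = g := by
    have hroots : ∀ x ∈ Set.Icc (-1 : ℝ) 1, (f - g).IsRoot x := by
      intro x hx
      obtain ⟨hx1, hx2⟩ := hx
      have hxc : Real.cos (Real.arccos x) = x := Real.cos_arccos hx1 hx2
      have hkey := key_prod n (by omega) θ (Real.arccos x)
      rw [hxc] at hkey
      have hf : f.eval x = a * (Real.cos (n * Real.arccos x) - Real.cos (n * θ)) := by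
        rw [hfdef, eval_prod]
        simp only [eval_sub, eval_X, eval_C]
        rw [hadef]
        exact hkey
      have hT := Chebyshev.T_real_cos (Real.arccos x) n
      rw [hxc] at hT
      have hg : g.eval x = a * (Real.cos (n * Real.arccos x) - Real.cos (n * θ)) := by
        rw [hgdef]
        simp only [eval_sub, eval_mul, eval_C]
        rw [hT]
        push_cast
        ring
      simp [IsRoot, hf, hg]
    have h0 : f - g = 0 := by
      apply eq_zero_of_infinite_isRoot
      exact ((Set.Icc_infinite (by norm_num : (-1:ℝ) < 1)).mono hroots)
    exact sub_eq_zero.mp h0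
  -- the derivative
  set p : ℝ[X] := derivative f with hpdef
  have hp : p = C a * ((n : ℤ) * Chebyshev.U ℝ ((n : ℤ) - 1)) := by
    rw [hpdef, hfg, hgdef, derivative_sub, derivative_C, derivative_C_mul,
      Chebyshev.T_derivative_eq_U, sub_zero]
  have hproot : ∀ k ∈ Finset.Icc 1 (n - 1), p.IsRoot (Real.cos (k * π / n)) := by
    intro k hk
    rw [Finset.mem_Icc] at hk
    have hk1 : (1 : ℝ) ≤ k := by exact_mod_cast hk.1
    have hkn : (k : ℝ) < n := by exact_mod_cast (by omega : k < n)
    have h1 : (0 : ℝ) < k * π / n := by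
      have := Real.pi_pos
      positivity
    have h2 : k * π / n < π := by
      rw [div_lt_iff₀ hnpos]
      nlinarith [Real.pi_pos]
    have hsin : Real.sin (k * π / n) ≠ 0 := ne_of_gt (Real.sin_pos_of_pos_of_lt_pi h1 h2)
    have hU := Chebyshev.U_real_cos (k * π / n) ((n : ℤ) - 1)
    have harg : ((((n : ℤ) - 1 : ℤ) : ℝ) + 1) * (k * π / n) = k * π := by
      push_cast
      field_simp
      ring
    rw [harg, Real.sin_nat_mul_pi] at hU
    have hU0 : (Chebyshev.U ℝ ((n : ℤ) - 1)).eval (Real.cos (k * π / n)) = 0 := by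
      rcases mul_eq_zero.1 hU with h | h
      · exact h
      · exact absurd h hsin
    rw [hp]
    simp [IsRoot, hU0]
  have hpne : p ≠ 0 := by
    intro h
    have hc : p.coeff (n - 1) ≠ 0 := by
      rw [hpdef, coeff_derivative]
      have h1 : n - 1 + 1 = n := by omega
      have hcoeff : f.coeff n = 1 := by rw [← hdeg]; exact hmono.coeff_natDegree
      rw [h1, hcoeff]
      have : (0:ℝ) < 1 * (↑(n - 1) + 1) := by positivity
      exact ne_of_gt this
    exact hc (by simp [h])
  have hcard : Multiset.card p.roots ≤ n - 1 := by
    refine le_trans (card_roots' p) ?_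
    calc p.natDegree ≤ f.natDegree - 1 := natDegree_derivative_le f
    _ = n - 1 := by rw [hdeg]
  set s : Finset ℝ := (Finset.Icc 1 (n - 1)).image (fun k : ℕ => Real.cos (k * π / n))
    with hsdef
  have hmemIcc : ∀ l : ℕ, 1 ≤ l → l ≤ n - 1 → (l * π / n) ∈ Set.Icc (0:ℝ) π := by
    intro l h1 h2
    have hl : (l : ℝ) ≤ n := by exact_mod_cast (by omega : l ≤ n)
    constructor
    · positivity
    · rw [div_le_iff₀ hnpos]
      nlinarith [Real.pi_pos]
  have hinj : Set.InjOn (fun k : ℕ => Real.cos (k * π / n)) (Finset.Icc 1 (n - 1)) := by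
    intro i hi j hj hij
    simp only [Finset.coe_Icc, Set.mem_Icc] at hi hj
    have := Real.injOn_cos (hmemIcc i hi.1 hi.2) (hmemIcc j hj.1 hj.2) hij
    field_simp at this
    exact_mod_cast this
  have hscard : s.card = n - 1 := by
    rw [hsdef, Finset.card_image_of_injOn hinj, Nat.card_Icc]
    omega
  have hsub : s.val ≤ p.roots := by
    refine Finset.val_le_iff_val_subset.2 ?_
    intro x hx
    rw [Finset.mem_val, hsdef, Finset.mem_image] at hx
    obtain ⟨k, hk, rfl⟩ := hx
    exact (mem_roots hpne).2 (hproot k hk)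
  have hrooteq : p.roots = s.val := by
    refine (Multiset.eq_of_le_of_card_le hsub ?_).symm
    have h1 : Multiset.card s.val = n - 1 := hscard
    rw [h1]
    exact hcard
  have hsetEq : {x : ℝ | p.eval x = 0} = ↑s := by
    ext x
    simp only [Set.mem_setOf_eq, Finset.mem_coe, ← Finset.mem_val, ← hrooteq]
    rw [mem_roots hpne]
    rfl
  rw [hsetEq]
  have hub : ∀ x ∈ (↑s : Set ℝ), x ≤ Real.cos (π / n) := by
    intro x hx
    obtain ⟨k, hk, rfl⟩ := Finset.mem_image.1 (Finset.mem_coe.1 hx)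
    rw [Finset.mem_Icc] at hk
    have hk1 : (1 : ℝ) ≤ k := by exact_mod_cast hk.1
    have hmem := hmemIcc k hk.1 hk.2
    apply Real.cos_le_cos_of_nonneg_of_le_pi
    · positivity
    · exact hmem.2
    · calc π / n = 1 * π / n := by ring
      _ ≤ k * π / n := by gcongr
  have hlb : ∀ x ∈ (↑s : Set ℝ), -Real.cos (π / n) ≤ x := by
    intro x hx
    obtain ⟨k, hk, rfl⟩ := Finset.mem_image.1 (Finset.mem_coe.1 hx)
    rw [Finset.mem_Icc] at hk
    have hmem := hmemIcc k hk.1 hk.2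
    have hcast : ((n - 1 : ℕ) : ℝ) = (n : ℝ) - 1 := by
      push_cast [Nat.cast_sub (by omega : 1 ≤ n)]
      ring
    have hneg : Real.cos ((n - 1 : ℕ) * π / n) = -Real.cos (π / n) := by
      have h3 : ((n - 1 : ℕ) : ℝ) * π / n = π - π / n := by
        rw [hcast]
        field_simp
      rw [h3, Real.cos_pi_sub]
    rw [← hneg]
    have hkn : (k : ℝ) ≤ ((n - 1 : ℕ) : ℝ) := by exact_mod_cast hk.2
    apply Real.cos_le_cos_of_nonneg_of_le_pi
    · positivity
    · exact (hmemIcc (n - 1) (by omega) le_rfl).2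
    · gcongr
  have hmem1 : Real.cos (π / n) ∈ (↑s : Set ℝ) := by
    rw [Finset.mem_coe, hsdef, Finset.mem_image]
    exact ⟨1, Finset.mem_Icc.2 ⟨le_rfl, by omega⟩, by norm_num⟩
  have hmem2 : -Real.cos (π / n) ∈ (↑s : Set ℝ) := by
    rw [Finset.mem_coe, hsdef, Finset.mem_image]
    refine ⟨n - 1, Finset.mem_Icc.2 ⟨by omega, le_rfl⟩, ?_⟩
    have hcast : ((n - 1 : ℕ) : ℝ) = (n : ℝ) - 1 := by
      push_cast [Nat.cast_sub (by omega : 1 ≤ n)]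
      ring
    have h3 : ((n - 1 : ℕ) : ℝ) * π / n = π - π / n := by
      rw [hcast]
      field_simp
    rw [h3, Real.cos_pi_sub]
  exact ⟨⟨hmem1, hub⟩, ⟨hmem2, hlb⟩⟩
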